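/- Let N, n, m be integers with 1 ≤ m ≤ N and 0 ≤ n ≤ N−1, and let ρ1, ρ2 be real numbers with 1+(N−n−1)ρ1 > 0, 1+(N−m−1)ρ2 ≠ 0 and ρ2 ≠ 1. Then the second derivative at t = 0 of the function t ↦ φ(N,n,m,ρ1,ρ2,t) is strictly negative, and this function has a strict local maximum at t = 0. -/

import Mathlib

open Filter

noncomputable section

/-- The two-layer Schur-complement quantity φ(N,n,m,ρ1,ρ2,ρ12) of the paper. -/
def phi (N n m : ℕ) (ρ1 ρ2 ρ12 : ℝ) : ℝ :=
  let D1 : ℝ := 1 + ((N : ℝ) - (n : ℝ) - 1) * ρ1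
  let D2 : ℝ := D1 * (1 + ((N : ℝ) - (m : ℝ) - 1) * ρ2)
    - ((N : ℝ) - (m : ℝ)) * ((N : ℝ) - (n : ℝ)) * ρ12 ^ 2
  (m : ℝ) * (1 + ((m : ℝ) - 1) * ρ2)
    - (m : ℝ) ^ 2 * ((N : ℝ) - (n : ℝ)) * ρ12 ^ 2 / D1
    - (m : ℝ) ^ 2 * ((N : ℝ) - (n : ℝ)) ^ 2 * ((N : ℝ) - (m : ℝ)) * ρ12 ^ 4 / (D1 * D2)
    + 2 * (m : ℝ) ^ 2 * ((N : ℝ) - (m : ℝ)) * ((N : ℝ) - (n : ℝ)) * ρ2 * ρ12 ^ 2 / D2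
    - (m : ℝ) ^ 2 * ((N : ℝ) - (m : ℝ)) * ρ2 ^ 2 * D1 / D2

set_option maxHeartbeats 1000000 in
lemma key (x a b M r t : ℝ) (hx : x ≠ 0) (hB : 1+(b-1)*r ≠ 0)
    (hq : x*(1+(b-1)*r) - b*a*t^2 ≠ 0) :
    M*(1+(M-1)*r) - M^2*a*t^2/x - M^2*a^2*b*t^4/(x*(x*(1+(b-1)*r) - b*a*t^2))
      + 2*M^2*b*a*r*t^2/(x*(1+(b-1)*r) - b*a*t^2) - M^2*b*r^2*x/(x*(1+(b-1)*r) - b*a*t^2)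
    = (M*(1+(M-1)*r) - M^2*b*r^2*x/(x*(1+(b-1)*r)))
      - M^2*a*(1-r)^2*t^2/((1+(b-1)*r)*(x*(1+(b-1)*r) - b*a*t^2)) := by
  have e : ∀ B D : ℝ, B = 1+(b-1)*r → B ≠ 0 → D = x*B - b*a*t^2 → D ≠ 0 →
    M*(1+(M-1)*r) - M^2*a*t^2/x - M^2*a^2*b*t^4/(x*D)
      + 2*M^2*b*a*r*t^2/D - M^2*b*r^2*x/D
    = (M*(1+(M-1)*r) - M^2*b*r^2*x/(x*B))
      - M^2*a*(1-r)^2*t^2/(B*D) := by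
    intro B D hBd hB0 hD hD0
    field_simp
    rw [hD, hBd]
    ring
  exact e _ _ rfl hB rfl hq

lemma phi_eq' (N n m : ℕ) (ρ1 ρ2 t : ℝ)
    (hx : (1 + ((N:ℝ)-(n:ℝ)-1)*ρ1) ≠ 0)
    (hB : (1 + ((N:ℝ)-(m:ℝ)-1)*ρ2) ≠ 0)
    (hq : (1 + ((N:ℝ)-(n:ℝ)-1)*ρ1) * (1 + ((N:ℝ)-(m:ℝ)-1)*ρ2)
        - ((N:ℝ)-(m:ℝ))*((N:ℝ)-(n:ℝ))*t^2 ≠ 0) :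
    phi N n m ρ1 ρ2 t = phi N n m ρ1 ρ2 0
      - (m:ℝ)^2*((N:ℝ)-(n:ℝ))*(1-ρ2)^2 * t^2
        / ((1 + ((N:ℝ)-(m:ℝ)-1)*ρ2) * ((1 + ((N:ℝ)-(n:ℝ)-1)*ρ1) * (1 + ((N:ℝ)-(m:ℝ)-1)*ρ2)
            - ((N:ℝ)-(m:ℝ))*((N:ℝ)-(n:ℝ))*t^2)) := by
  have h := key (1 + ((N:ℝ)-(n:ℝ)-1)*ρ1) ((N:ℝ)-(n:ℝ)) ((N:ℝ)-(m:ℝ)) (m:ℝ) ρ2 t hx hB hq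
  simp only [phi]
  norm_num
  rw [h]

set_option maxHeartbeats 1000000 in
theorem stmt_14 (N n m : ℕ) (hm1 : 1 ≤ m) (hm2 : m ≤ N) (hn : n ≤ N - 1)
    (ρ1 ρ2 : ℝ)
    (hD1 : 0 < 1 + ((N : ℝ) - (n : ℝ) - 1) * ρ1)
    (hD2 : 1 + ((N : ℝ) - (m : ℝ) - 1) * ρ2 ≠ 0)
    (h2 : ρ2 ≠ 1) :
    deriv (deriv (fun t : ℝ => phi N n m ρ1 ρ2 t)) 0 < 0 ∧
    ∀ᶠ t in nhdsWithin (0 : ℝ) {(0 : ℝ)}ᶜ,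
      phi N n m ρ1 ρ2 t < phi N n m ρ1 ρ2 0 := by
  obtain ⟨x, hxdef⟩ : ∃ x : ℝ, x = 1 + ((N : ℝ) - (n : ℝ) - 1) * ρ1 := ⟨_, rfl⟩
  obtain ⟨B, hBdef⟩ : ∃ B : ℝ, B = 1 + ((N : ℝ) - (m : ℝ) - 1) * ρ2 := ⟨_, rfl⟩
  obtain ⟨a, hadef⟩ : ∃ a : ℝ, a = (N : ℝ) - (n : ℝ) := ⟨_, rfl⟩
  obtain ⟨b, hbdef⟩ : ∃ b : ℝ, b = (N : ℝ) - (m : ℝ) := ⟨_, rfl⟩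
  rw [← hxdef] at hD1
  rw [← hBdef] at hD2
  have hx : x ≠ 0 := ne_of_gt hD1
  have hnN : n < N := by omega
  have ha : 0 < a := by rw [hadef, sub_pos]; exact_mod_cast hnN
  have hM : (1:ℝ) ≤ (m:ℝ) := by exact_mod_cast hm1
  have hm0 : (0:ℝ) < (m:ℝ) := by linarith
  have hr : (1 - ρ2) ≠ 0 := sub_ne_zero.mpr (Ne.symm h2)
  obtain ⟨c, hcdef⟩ : ∃ c : ℝ, c = (m:ℝ)^2 * a * (1-ρ2)^2 := ⟨_, rfl⟩
  have hc : 0 < c := by rw [hcdef]; positivity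
  obtain ⟨q, hqdef⟩ : ∃ q : ℝ → ℝ, q = fun t => x * B - b * a * t ^ 2 := ⟨_, rfl⟩
  have hqt' : ∀ t : ℝ, q t = x * B - b * a * t ^ 2 := fun t => by rw [hqdef]
  have hq0 : q 0 = x * B := by rw [hqt']; ring
  have hq0ne : q 0 ≠ 0 := by rw [hq0]; exact mul_ne_zero hx hD2
  have hqc : Continuous q := by rw [hqdef]; fun_prop
  have hev : ∀ᶠ t in nhds 0, q t ≠ 0 := hqc.continuousAt.eventually_ne hq0ne
  obtain ⟨ψ, hψdef⟩ : ∃ ψ : ℝ → ℝ,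
      ψ = fun t => phi N n m ρ1 ρ2 0 - c * t ^ 2 / (B * q t) := ⟨_, rfl⟩
  have hψt : ∀ t : ℝ, ψ t = phi N n m ρ1 ρ2 0 - c * t ^ 2 / (B * q t) :=
    fun t => by rw [hψdef]
  have hphiEq : (fun t : ℝ => phi N n m ρ1 ρ2 t) =ᶠ[nhds 0] ψ := by
    filter_upwards [hev] with t ht
    rw [hψt t, hcdef, hqt', hxdef, hBdef, hadef, hbdef]
    rw [hqt', hxdef, hBdef, hadef, hbdef] at ht
    exact phi_eq' N n m ρ1 ρ2 t (hxdef ▸ hx) (hBdef ▸ hD2) ht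
  obtain ⟨F, hFdef⟩ : ∃ F : ℝ → ℝ, F = fun t => -(2 * c * x) * t / q t ^ 2 := ⟨_, rfl⟩
  have hFt : ∀ t : ℝ, F t = -(2 * c * x) * t / q t ^ 2 := fun t => by rw [hFdef]
  have hqderiv : ∀ t : ℝ, HasDerivAt q (-(b * a * (2 * t))) t := by
    intro t
    have h1 : HasDerivAt (fun s : ℝ => s ^ 2) (2 * t) t := by
      simpa using hasDerivAt_pow 2 t
    have h2 := (h1.const_mul (b * a)).const_sub (x * B)
    rw [hqdef]
    simpa [mul_assoc] using h2
  have hψF : ∀ t : ℝ, q t ≠ 0 → HasDerivAt ψ (F t) t := by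
    intro t ht
    have hnum : HasDerivAt (fun s : ℝ => c * s ^ 2) (c * (2 * t)) t := by
      have h1 : HasDerivAt (fun s : ℝ => s ^ 2) (2 * t) t := by
        simpa using hasDerivAt_pow 2 t
      exact h1.const_mul c
    have hden : HasDerivAt (fun s => B * q s) (B * -(b * a * (2 * t))) t :=
      (hqderiv t).const_mul B
    have hBq : B * q t ≠ 0 := mul_ne_zero hD2 ht
    have hdiv := (hnum.div hden hBq).const_sub (phi N n m ρ1 ρ2 0)
    have hval : -((c * (2 * t) * (B * q t) - c * t ^ 2 * (B * -(b * a * (2 * t)))) / (B * q t) ^ 2)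
        = F t := by
      rw [hFt t]
      rw [hqt' t] at ht ⊢
      field_simp
      ring
    rw [hψdef]
    rw [← hval]
    exact hdiv
  have hderivψ : deriv ψ =ᶠ[nhds 0] F := by
    filter_upwards [hev] with t ht
    exact (hψF t ht).deriv
  constructor
  · have e1 : deriv (deriv (fun t : ℝ => phi N n m ρ1 ρ2 t)) 0 = deriv (deriv ψ) 0 :=
      (hphiEq.deriv).deriv_eq
    have e2 : deriv (deriv ψ) 0 = deriv F 0 := hderivψ.deriv_eq
    have hnum : HasDerivAt (fun s : ℝ => -(2 * c * x) * s) (-(2 * c * x)) 0 := by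
      simpa using (hasDerivAt_id (0:ℝ)).const_mul (-(2 * c * x))
    have hq20 : q 0 ^ 2 ≠ 0 := pow_ne_zero 2 hq0ne
    have hF0 := hnum.div ((hqderiv 0).pow 2) hq20
    have hFder : HasDerivAt F ((-(2 * c * x) * q 0 ^ 2 -
        -(2 * c * x) * 0 * ((2:ℕ) * q 0 ^ (2 - 1) * -(b * a * (2 * 0)))) / (q 0 ^ 2) ^ 2) 0 := by
      rw [hFdef]; exact hF0
    rw [e1, e2, hFder.deriv]
    have hq2pos : 0 < q 0 ^ 2 := by positivity
    have h2cx : 0 < 2 * c * x := by positivity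
    simp only [mul_zero, zero_mul, sub_zero]
    apply div_neg_of_neg_of_pos
    · nlinarith
    · positivity
  · have hBqpos : ∀ᶠ t in nhds 0, 0 < B * q t := by
      have hc0 : ContinuousAt (fun t => B * q t) 0 := (continuous_const.mul hqc).continuousAt
      have hpos : 0 < B * q 0 := by
        rw [hq0, show B * (x * B) = x * B ^ 2 by ring]
        positivity
      exact hc0.eventually (eventually_gt_nhds hpos)
    have h1 : ∀ᶠ t in nhdsWithin (0:ℝ) {(0:ℝ)}ᶜ, phi N n m ρ1 ρ2 t = ψ t ∧ 0 < B * q t :=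
      (hphiEq.and hBqpos).filter_mono nhdsWithin_le_nhds
    have h2' : ∀ᶠ t in nhdsWithin (0:ℝ) {(0:ℝ)}ᶜ, t ≠ 0 := by
      filter_upwards [self_mem_nhdsWithin] with t ht
      simpa using ht
    filter_upwards [h1, h2'] with t hpair htne
    obtain ⟨heq, hpos⟩ := hpair
    rw [heq, hψt t]
    have ht2 : 0 < t ^ 2 := by positivity
    have hfrac : 0 < c * t ^ 2 / (B * q t) := div_pos (mul_pos hc ht2) hpos
    linarith
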